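/- Every element x of the string group L(p) can be written uniquely in the normal form x = Σ_{i=1}^t l_i x_i + l c, where 0 ≤ l_i ≤ p_i − 1 for each i and l ∈ ℤ. -/

import Mathlib

open scoped BigOperators

def stringRelators {ι : Type} [DecidableEq ι] (p : ι → ℕ) : Set (ι → ℤ) :=
  { v | ∃ i j : ι, v = (p i : ℤ) • Pi.single i 1 - (p j : ℤ) • Pi.single j 1 }

abbrev StringGroup {ι : Type} [DecidableEq ι] (p : ι → ℕ) : Type :=
  (ι → ℤ) ⧸ AddSubgroup.closure (stringRelators p)

def xgen {ι : Type} [DecidableEq ι] (p : ι → ℕ) (i : ι) : StringGroup p :=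
  QuotientAddGroup.mk (Pi.single i 1)

def canon {ι : Type} [DecidableEq ι] (p : ι → ℕ) (i : ι) : StringGroup p :=
  (p i : ℤ) • xgen p i

lemma strAux_eq_zero (c a b : ℤ) (h : a = b * c) (h1 : -c < a) (h2 : a < c) :
    a = 0 ∧ b = 0 := by
  have hc : 0 < c := by omega
  rcases lt_trichotomy b 0 with hb | hb | hb
  · exfalso; have hb1 : b ≤ -1 := by omega
    nlinarith
  · subst hb; simp at h; exact ⟨h, rfl⟩
  · exfalso; have hb1 : 1 ≤ b := hb
    nlinarith

lemma strGroup_mem_closure_iff {t : ℕ} (p : Fin (t+1) → ℕ) (v : Fin (t+1) → ℤ) :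
    v ∈ AddSubgroup.closure (stringRelators p) ↔
      ∃ m : Fin (t+1) → ℤ, (∀ i, v i = m i * (p i : ℤ)) ∧ ∑ i, m i = 0 := by
  constructor
  · intro hv
    induction hv using AddSubgroup.closure_induction with
    | mem w hw =>
      obtain ⟨i, j, rfl⟩ := hw
      refine ⟨Pi.single i 1 - Pi.single j 1, fun k => ?_, ?_⟩
      · by_cases hki : k = i <;> by_cases hkj : k = j <;> subst_vars <;>
          simp_all [Pi.single_apply] <;> ring
      · simp [Finset.sum_sub_distrib, Pi.single_apply]
    | zero => exact ⟨0, by simp, by simp⟩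
    | add a b _ _ ha hb =>
      obtain ⟨m1, hm1, hs1⟩ := ha
      obtain ⟨m2, hm2, hs2⟩ := hb
      exact ⟨m1 + m2, fun i => by simp [hm1 i, hm2 i]; ring,
        by simp [Finset.sum_add_distrib, hs1, hs2]⟩
    | neg a _ ha =>
      obtain ⟨m, hm, hs⟩ := ha
      exact ⟨-m, fun i => by simp [hm i], by simp [hs]⟩
  · rintro ⟨m, hm, hs⟩
    have hv : v = ∑ i, m i • ((p i : ℤ) • Pi.single i 1 - (p 0 : ℤ) • Pi.single 0 1) := by
      funext k
      simp only [Finset.sum_apply, Pi.smul_apply, Pi.sub_apply, Pi.single_apply,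
        smul_eq_mul, mul_sub]
      rw [Finset.sum_sub_distrib]
      have h1 : ∑ i, m i * ((p i : ℤ) * if k = i then 1 else 0) = m k * p k := by
        simp [mul_ite]
      have h2 : ∑ i, m i * ((p 0 : ℤ) * if k = 0 then 1 else 0) = 0 := by
        rw [← Finset.sum_mul, hs, zero_mul]
      rw [h1, h2, hm k, sub_zero]
    rw [hv]
    exact AddSubgroup.sum_mem _ fun i _ =>
      AddSubgroup.zsmul_mem _
        (AddSubgroup.subset_closure
          (show _ ∈ stringRelators p from ⟨i, 0, rfl⟩)) _

lemma strSum_form {t : ℕ} (p : Fin (t+1) → ℕ) (L : Fin (t+1) → ℤ) (l : ℤ) :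
    (∑ i, L i • xgen p i + l • canon p 0 : StringGroup p) =
      QuotientAddGroup.mk (∑ i, L i • Pi.single i 1 + (l * (p 0 : ℤ)) • Pi.single 0 1) := by
  have hmk : ∀ w : Fin (t+1) → ℤ, (QuotientAddGroup.mk w : StringGroup p) =
      QuotientAddGroup.mk' (AddSubgroup.closure (stringRelators p)) w := fun _ => rfl
  rw [hmk, map_add, map_sum]
  simp only [map_zsmul]
  congr 1
  rw [mul_smul]
  rfl

lemma strComp_apply {t : ℕ} (p : Fin (t+1) → ℕ) (L : Fin (t+1) → ℤ) (l : ℤ)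
    (k : Fin (t+1)) :
    (((∑ i, L i • Pi.single i (1:ℤ)) + (l * (p 0 : ℤ)) • Pi.single 0 (1:ℤ) :
        Fin (t+1) → ℤ)) k =
      L k + (if k = 0 then l * (p 0 : ℤ) else 0) := by
  simp [Finset.sum_apply, Pi.single_apply, mul_ite]

theorem stmt1 {t : ℕ} (p : Fin (t+1) → ℕ) (hp : ∀ i, 2 ≤ p i)
    (x : StringGroup p) :
    ∃! lm : (Fin (t+1) → ℤ) × ℤ,
      (∀ i, 0 ≤ lm.1 i ∧ lm.1 i ≤ (p i : ℤ) - 1) ∧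
      x = ∑ i, lm.1 i • xgen p i + lm.2 • canon p 0 := by
  have hp0 : ∀ i, (0 : ℤ) < p i := fun i => by
    have := hp i; exact_mod_cast Nat.lt_of_lt_of_le (by norm_num) this
  obtain ⟨v, rfl⟩ := QuotientAddGroup.mk_surjective x
  have hrange : ∀ i : Fin (t+1), 0 ≤ v i % (p i : ℤ) ∧ v i % (p i : ℤ) ≤ (p i : ℤ) - 1 := by
    intro i
    have h1 := Int.emod_nonneg (v i) (hp0 i).ne'
    have h2 := Int.emod_lt_of_pos (v i) (hp0 i)
    exact ⟨h1, by omega⟩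
  have hrep : (QuotientAddGroup.mk v : StringGroup p) =
      ∑ i, (v i % (p i : ℤ)) • xgen p i + (∑ i, v i / (p i : ℤ)) • canon p 0 := by
    rw [strSum_form, QuotientAddGroup.eq_iff_sub_mem]
    refine (strGroup_mem_closure_iff p _).mpr
      ⟨fun k => v k / (p k : ℤ) - if k = 0 then (∑ i, v i / (p i : ℤ)) else 0, ?_, ?_⟩
    · intro k
      rw [Pi.sub_apply, strComp_apply]
      have hv := Int.emod_add_mul_ediv (v k) (p k)
      by_cases hk : k = 0
      · subst hk
        simp only [if_pos rfl, if_true]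
        linear_combination -hv
      · simp only [if_neg hk]
        linear_combination -hv
    · rw [Finset.sum_sub_distrib]
      simp
  refine ⟨(fun i => v i % (p i : ℤ), ∑ i, v i / (p i : ℤ)), ⟨hrange, hrep⟩, ?_⟩
  rintro ⟨L', l'⟩ ⟨hrange', hrep'⟩
  replace hrange' : ∀ i, 0 ≤ L' i ∧ L' i ≤ (p i : ℤ) - 1 := hrange'
  replace hrep' : (QuotientAddGroup.mk v : StringGroup p) =
      ∑ i, L' i • xgen p i + l' • canon p 0 := hrep'
  have heq : (∑ i, L' i • xgen p i + l' • canon p 0 : StringGroup p) =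
      ∑ i, (v i % (p i : ℤ)) • xgen p i + (∑ i, v i / (p i : ℤ)) • canon p 0 :=
    hrep'.symm.trans hrep
  rw [strSum_form p L' l', strSum_form p _ _, QuotientAddGroup.eq_iff_sub_mem] at heq
  obtain ⟨m, hm, hs⟩ := (strGroup_mem_closure_iff p _).mp heq
  have hw : ∀ k, (L' k - v k % (p k : ℤ)) +
      (if k = 0 then (l' - (∑ i, v i / (p i : ℤ))) * (p 0 : ℤ) else 0) = m k * (p k : ℤ) := by
    intro k
    have h := hm k
    rw [Pi.sub_apply, strComp_apply, strComp_apply] at h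
    by_cases hk : k = 0
    · subst hk; simp only [if_pos rfl, if_true] at h ⊢; linarith
    · simp only [if_neg hk] at h ⊢; linarith
  have hmne : ∀ k, k ≠ 0 → m k = 0 ∧ L' k = v k % (p k : ℤ) := by
    intro k hk
    have h := hw k
    rw [if_neg hk, add_zero] at h
    have hb := hrange k
    have hb' := hrange' k
    have := strAux_eq_zero (p k) (L' k - v k % (p k : ℤ)) (m k) h (by omega) (by omega)
    exact ⟨this.2, by omega⟩
  have hm0 : m 0 = 0 := by
    have hsum : ∑ k, m k = m 0 := by
      rw [Finset.sum_eq_single 0]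
      · intro b _ hb; exact (hmne b hb).1
      · simp
    omega
  have h0 := hw 0
  rw [if_pos rfl, hm0, zero_mul] at h0
  have hb := hrange 0
  have hb' := hrange' 0
  have haux := strAux_eq_zero (p 0) (L' 0 - v 0 % (p 0 : ℤ))
    ((∑ i, v i / (p i : ℤ)) - l') (by linear_combination h0) (by omega) (by omega)
  refine Prod.ext ?_ ?_
  · funext i
    by_cases hi : i = 0
    · subst hi; have := haux.1; simpa using by omega
    · simpa using (hmne i hi).2
  · have := haux.2; simpa using by omega
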